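/- For every integer j ≥ 2, P(j) = (8 - 16j³ - 8j⁴ + 15j⁶ + j⁷)/(8 - 16j³ - 16j⁴ + 32j⁷) is strictly positive. -/
import Mathlib

theorem casimir_pressure_coefficient_pos (j : ℤ) (hj : 2 ≤ j) :
    0 < ((8 : ℝ) - 16 * (j : ℝ) ^ 3 - 8 * (j : ℝ) ^ 4 + 15 * (j : ℝ) ^ 6 + (j : ℝ) ^ 7) /
          ((8 : ℝ) - 16 * (j : ℝ) ^ 3 - 16 * (j : ℝ) ^ 4 + 32 * (j : ℝ) ^ 7) := by
  have hx : (2 : ℝ) ≤ (j : ℝ) := by exact_mod_cast hj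
  apply div_pos <;> nlinarith [pow_pos (by linarith : (0:ℝ) < (j:ℝ)) 3,
    pow_pos (by linarith : (0:ℝ) < (j:ℝ)) 4, sq_nonneg ((j:ℝ) - 2),
    pow_le_pow_left₀ (by linarith : (0:ℝ) ≤ 2) hx 3,
    pow_le_pow_left₀ (by linarith : (0:ℝ) ≤ 2) hx 7,
    mul_le_mul_of_nonneg_left (pow_le_pow_left₀ (by linarith : (0:ℝ) ≤ 2) hx 3) (by positivity : (0:ℝ) ≤ (j:ℝ)^4),
    mul_le_mul_of_nonneg_left (pow_le_pow_left₀ (by linarith : (0:ℝ) ≤ 2) hx 3) (by positivity : (0:ℝ) ≤ (j:ℝ)^3)]
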